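/- Let C be a monoidal category which is a groupoid, and let x be an object equipped with a strongly 2-torsion structure, i.e. an isomorphism e : x ⊗ x ≅ 𝟙 such that (e.hom ⊗ id_x) ≫ λ_x = α_{x,x,x}.hom ≫ (id_x ⊗ e.hom) ≫ ρ_x as morphisms (x ⊗ x) ⊗ x ⟶ x. Then the evaluation morphisms φ^{(d)} are independent of the bracketing, in the following precise sense: for all p, q ∈ ℕ, μ_{p,q}.hom ≫ φ^{(p+q)} = (φ^{(p)} ⊗ φ^{(q)}) ≫ c_{p,q}, where c_{p,q} is e.hom if p and q are both odd, the left unitor λ_x if p is even and q is odd, the right unitor ρ_x if p is odd and q is even, and the unitor λ_𝟙 if p and q are both even. -/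

import Mathlib

open CategoryTheory MonoidalCategory

namespace StronglyTwoTorsion

variable {C : Type*} [Groupoid C] [MonoidalCategory C]

/-- Left-associated tensor powers: `x^{⊗0} := 𝟙` and `x^{⊗(d+1)} := x^{⊗d} ⊗ x`. -/
def pow (x : C) : ℕ → C
  | 0 => 𝟙_ C
  | d + 1 => pow x d ⊗ x

/-- The canonical coherence isomorphisms `μ_{p,q} : x^{⊗p} ⊗ x^{⊗q} ≅ x^{⊗(p+q)}`,
defined by `μ_{p,0} := ρ` and `μ_{p,q+1} := α⁻¹ ≫ (μ_{p,q} ⊗ id_x)`. -/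
def mu (x : C) : (p q : ℕ) → (pow x p ⊗ pow x q ⟶ pow x (p + q))
  | p, 0 => (ρ_ (pow x p)).hom
  | p, q + 1 => (α_ (pow x p) (pow x q) x).inv ≫ (mu x p q ▷ x)

/-- Parity of a natural number, as a boolean. -/
def par : ℕ → Bool
  | 0 => false
  | d + 1 => !(par d)

/-- The target of the evaluation morphism `φ^{(d)}`: `x` if `d` is odd, `𝟙` if `d` is even. -/
def tgt (x : C) : Bool → C
  | false => 𝟙_ C
  | true => x

/-- One step of the recursive definition of the evaluation morphisms. -/
def step (x : C) (e : x ⊗ x ≅ 𝟙_ C) {z : C} :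
    (b : Bool) → (z ⟶ tgt x b) → (z ⊗ x ⟶ tgt x (!b))
  | true, f => (f ▷ x) ≫ e.hom
  | false, f => (f ▷ x) ≫ (λ_ x).hom

/-- The evaluation morphisms `φ^{(d)} : x^{⊗d} ⟶ x` (`d` odd) resp. `x^{⊗d} ⟶ 𝟙` (`d` even):
`φ^{(0)} := id`, `φ^{(d+1)} := (φ^{(d)} ⊗ id_x) ≫ e` if `d` is odd and
`φ^{(d+1)} := (φ^{(d)} ⊗ id_x) ≫ λ_x` if `d` is even. -/
def phi (x : C) (e : x ⊗ x ≅ 𝟙_ C) : (d : ℕ) → (pow x d ⟶ tgt x (par d))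
  | 0 => 𝟙 (𝟙_ C)
  | d + 1 => step x e (par d) (phi x e d)

/-- The comparison morphisms `c_{p,q}`: the counit `e` if `p, q` are both odd, the left
unitor if `p` is even and `q` odd, the right unitor if `p` is odd and `q` even, and the
unitor `λ_𝟙` if both are even. -/
def cmp (x : C) (e : x ⊗ x ≅ 𝟙_ C) :
    (a b : Bool) → (tgt x a ⊗ tgt x b ⟶ tgt x (xor a b))
  | true, true => e.hom
  | false, true => (λ_ x).hom
  | true, false => (ρ_ x).hom
  | false, false => (λ_ (𝟙_ C)).hom

lemma par_add (p q : ℕ) : par (p + q) = xor (par p) (par q) := by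
  induction q with
  | zero => simp [par]
  | succ q ih =>
      show par ((p + q) + 1) = xor (par p) (par (q + 1))
      simp only [par, ih]
      cases par p <;> cases par q <;> rfl


lemma whisker_assoc_gen (x : C) {A B D E W : C} (m : A ⟶ B) (f : B ⟶ D) (k : D ⊗ x ⟶ E)
    (h : E ⟶ W) : (m ▷ x) ≫ ((f ▷ x) ≫ k) ≫ h = (((m ≫ f) ▷ x) ≫ k) ≫ h := by
  simp

lemma whisker_step_assoc (x : C) (e : x ⊗ x ≅ 𝟙_ C) {z z' W : C} (m : z' ⟶ z) (b : Bool)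
    (f : z ⟶ tgt x b) (h : tgt x (!b) ⟶ W) :
    (m ▷ x) ≫ step x e b f ≫ h = step x e b (m ≫ f) ≫ h := by
  cases b <;> exact whisker_assoc_gen x m f _ h

lemma base (x : C) (e : x ⊗ x ≅ 𝟙_ C) (a : Bool) {P : C} (f : P ⟶ tgt x a) :
    (ρ_ P).hom ≫ f ≫ eqToHom (congrArg (tgt x) (show a = xor a false by
      cases a <;> rfl)) = (f ⊗ₘ 𝟙 (𝟙_ C)) ≫ cmp x e a false := by
  cases a
  · show (ρ_ P).hom ≫ f ≫ 𝟙 _ = (f ⊗ₘ 𝟙 (𝟙_ C)) ≫ (λ_ (𝟙_ C)).hom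
    simp only [Category.comp_id]
    monoidal
  · show (ρ_ P).hom ≫ f ≫ 𝟙 _ = (f ⊗ₘ 𝟙 (𝟙_ C)) ≫ (ρ_ x).hom
    simp only [Category.comp_id]
    monoidal

lemma step_cast (x : C) (e : x ⊗ x ≅ 𝟙_ C) {z : C} {b b' : Bool} (h : b = b')
    (f : z ⟶ tgt x b) :
    step x e b f = step x e b' (f ≫ eqToHom (congrArg (tgt x) h)) ≫
      eqToHom (congrArg (tgt x) (congrArg Bool.not h).symm) := by
  subst h; simp

lemma key (x : C) (e : x ⊗ x ≅ 𝟙_ C)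
    (he : (e.hom ⊗ₘ 𝟙 x) ≫ (λ_ x).hom = (α_ x x x).hom ≫ (𝟙 x ⊗ₘ e.hom) ≫ (ρ_ x).hom)
    (a b : Bool) {P Q : C} (f : P ⟶ tgt x a) (g : Q ⟶ tgt x b) :
    (α_ P Q x).inv ≫ step x e (xor a b) ((f ⊗ₘ g) ≫ cmp x e a b) ≫
      eqToHom (congrArg (tgt x) (show (!(xor a b)) = xor a (!b) by
        cases a <;> cases b <;> rfl)) =
    (f ⊗ₘ step x e b g) ≫ cmp x e a (!b) := by
  have he' : (α_ x x x).inv ≫ (e.hom ▷ x) ≫ (λ_ x).hom = (x ◁ e.hom) ≫ (ρ_ x).hom := by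
    rw [← tensorHom_id, ← id_tensorHom, he, Iso.inv_hom_id_assoc]
  cases a <;> cases b
  · show (α_ P Q x).inv ≫ (((f ⊗ₘ g) ≫ (λ_ (𝟙_ C)).hom) ▷ x ≫ (λ_ x).hom) ≫ 𝟙 x =
      (f ⊗ₘ (g ▷ x ≫ (λ_ x).hom)) ≫ (λ_ x).hom
    simp only [Category.comp_id]
    monoidal
  · show (α_ P Q x).inv ≫ (((f ⊗ₘ g) ≫ (λ_ x).hom) ▷ x ≫ e.hom) ≫ 𝟙 (𝟙_ C) =
      (f ⊗ₘ (g ▷ x ≫ e.hom)) ≫ (λ_ (𝟙_ C)).hom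
    simp only [Category.comp_id]
    monoidal
  · show (α_ P Q x).inv ≫ (((f ⊗ₘ g) ≫ (ρ_ x).hom) ▷ x ≫ e.hom) ≫ 𝟙 (𝟙_ C) =
      (f ⊗ₘ (g ▷ x ≫ (λ_ x).hom)) ≫ e.hom
    simp only [Category.comp_id]
    monoidal
  · change P ⟶ x at f; change Q ⟶ x at g
    show (α_ P Q x).inv ≫ (((f ⊗ₘ g) ≫ e.hom) ▷ x ≫ (λ_ x).hom) ≫ 𝟙 x =
      (f ⊗ₘ (g ▷ x ≫ e.hom)) ≫ (ρ_ x).hom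
    simp only [Category.comp_id]
    rw [comp_whiskerRight, ← tensorHom_id (f ⊗ₘ g), Category.assoc,
      ← associator_inv_naturality_assoc, tensorHom_id]
    show (f ⊗ₘ g ▷ x) ≫ (α_ x x x).inv ≫ e.hom ▷ x ≫ (λ_ x).hom =
      (f ⊗ₘ g ▷ x ≫ e.hom) ≫ (ρ_ x).hom
    rw [he']
    monoidal

lemma aux (x : C) (e : x ⊗ x ≅ 𝟙_ C)
    (he : (e.hom ⊗ₘ 𝟙 x) ≫ (λ_ x).hom = (α_ x x x).hom ≫ (𝟙 x ⊗ₘ e.hom) ≫ (ρ_ x).hom)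
    (p q : ℕ) :
    mu x p q ≫ phi x e (p + q) ≫ eqToHom (congrArg (tgt x) (par_add p q)) =
      (phi x e p ⊗ₘ phi x e q) ≫ cmp x e (par p) (par q) := by
  induction q with
  | zero =>
      exact base x e (par p) (phi x e p)
  | succ q ih =>
      show ((α_ (pow x p) (pow x q) x).inv ≫ (mu x p q ▷ x)) ≫
          step x e (par (p + q)) (phi x e (p + q)) ≫
          eqToHom (congrArg (tgt x) (show (!(par (p + q))) = xor (par p) (!(par q)) by
            rw [par_add]; cases par p <;> cases par q <;> rfl)) =
        (phi x e p ⊗ₘ step x e (par q) (phi x e q)) ≫ cmp x e (par p) (!(par q))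
      rw [step_cast x e (par_add p q) (phi x e (p + q))]
      simp only [Category.assoc, eqToHom_trans, whisker_step_assoc]
      rw [ih]
      exact key x e he (par p) (par q) (phi x e p) (phi x e q)

/-- Generalized associativity in a strongly 2-torsion coherent 2-group: if `C` is a
monoidal groupoid and `e : x ⊗ x ≅ 𝟙` satisfies the strong 2-torsion condition
`(e ⊗ id_x) ≫ λ_x = α ≫ (id_x ⊗ e) ≫ ρ_x`, then the evaluation morphisms `φ^{(d)}` are
independent of the bracketing: `μ_{p,q} ≫ φ^{(p+q)} = (φ^{(p)} ⊗ φ^{(q)}) ≫ c_{p,q}`. -/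
theorem phi_bracketing_independence (x : C) (e : x ⊗ x ≅ 𝟙_ C)
    (he : (e.hom ⊗ₘ 𝟙 x) ≫ (λ_ x).hom = (α_ x x x).hom ≫ (𝟙 x ⊗ₘ e.hom) ≫ (ρ_ x).hom)
    (p q : ℕ) :
    mu x p q ≫ phi x e (p + q) =
      (phi x e p ⊗ₘ phi x e q) ≫ cmp x e (par p) (par q) ≫
        eqToHom (congrArg (tgt x) (par_add p q).symm) := by
  rw [← Category.assoc, ← aux x e he p q]
  simp [eqToHom_trans]

end StronglyTwoTorsion
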